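/- Let G : T*𝕋ⁿ → ℝ satisfy the S¹ symbol bounds ⟨ξ⟩^{−1+|β|}|∂_x^α∂_ξ^βG| ≤ ε₀ for |α|+|β| ≤ 2. Then for ε₀ sufficiently small the 2-form obtained by pulling back Re(dζ∧dz) to T*𝕋ⁿ via (x,ξ) ↦ (x + iG_ξ(x,ξ), ξ − iG_x(x,ξ)) is a nondegenerate 2-form; i.e. the deformation Λ_G of T*𝕋ⁿ is ℝ-symplectic. -/

import Mathlib

open Complex

noncomputable section

/-- The Japanese bracket on `ℝⁿ` (plain pi type). -/
def Jb {n : ℕ} (ξ : Fin n → ℝ) : ℝ :=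
  Real.sqrt (1 + ∑ i, ξ i ^ 2)

/-- The `i`-th coordinate direction in the base (`x`) variables. -/
def ex {n : ℕ} (i : Fin n) : (Fin n → ℝ) × (Fin n → ℝ) := (Pi.single i 1, 0)

/-- The `i`-th coordinate direction in the fiber (`ξ`) variables. -/
def eXi {n : ℕ} (i : Fin n) : (Fin n → ℝ) × (Fin n → ℝ) := (0, Pi.single i 1)

/-- The differential of `z_j = x_j + i ∂_{ξ_j}G` in the direction `w`. -/
def Dz {n : ℕ} (G : (Fin n → ℝ) × (Fin n → ℝ) → ℝ) (j : Fin n)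
    (p w : (Fin n → ℝ) × (Fin n → ℝ)) : ℂ :=
  fderiv ℝ (fun q : (Fin n → ℝ) × (Fin n → ℝ) =>
    ((q.1 j : ℝ) : ℂ) + Complex.I * ((fderiv ℝ G q (eXi j) : ℝ) : ℂ)) p w

/-- The differential of `ζ_j = ξ_j − i ∂_{x_j}G` in the direction `w`. -/
def Dzeta {n : ℕ} (G : (Fin n → ℝ) × (Fin n → ℝ) → ℝ) (j : Fin n)
    (p w : (Fin n → ℝ) × (Fin n → ℝ)) : ℂ :=
  fderiv ℝ (fun q : (Fin n → ℝ) × (Fin n → ℝ) =>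
    ((q.2 j : ℝ) : ℂ) - Complex.I * ((fderiv ℝ G q (ex j) : ℝ) : ℂ)) p w

namespace DeformAux

variable {n : ℕ}

lemma keyF {G : (Fin n → ℝ) × (Fin n → ℝ) → ℝ} (hG : ContDiff ℝ 2 G)
    (p v w : (Fin n → ℝ) × (Fin n → ℝ)) :
    fderiv ℝ (fun q => fderiv ℝ G q v) p w = fderiv ℝ (fderiv ℝ G) p w v := by
  have hdf : DifferentiableAt ℝ (fderiv ℝ G) p :=
    ((hG.fderiv_right (m := 1) (by norm_num)).differentiable one_ne_zero) p
  have := ((ContinuousLinearMap.apply ℝ ℝ v).hasFDerivAt.comp p hdf.hasFDerivAt).fderiv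
  calc fderiv ℝ (fun q => fderiv ℝ G q v) p w
      = fderiv ℝ ((ContinuousLinearMap.apply ℝ ℝ v) ∘ (fderiv ℝ G)) p w := rfl
    _ = fderiv ℝ (fderiv ℝ G) p w v := by rw [this]; rfl

lemma symmF {G : (Fin n → ℝ) × (Fin n → ℝ) → ℝ} (hG : ContDiff ℝ 2 G)
    (p v w : (Fin n → ℝ) × (Fin n → ℝ)) :
    fderiv ℝ (fderiv ℝ G) p v w = fderiv ℝ (fderiv ℝ G) p w v :=
  hG.contDiffAt.isSymmSndFDerivAt (by norm_num) v w

lemma DzF {G : (Fin n → ℝ) × (Fin n → ℝ) → ℝ} (hG : ContDiff ℝ 2 G) (j : Fin n)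
    (p w : (Fin n → ℝ) × (Fin n → ℝ)) :
    Dz G j p w = ((w.1 j : ℝ) : ℂ) + Complex.I * ((fderiv ℝ (fderiv ℝ G) p w (eXi j) : ℝ) : ℂ) := by
  have hdf : DifferentiableAt ℝ (fderiv ℝ G) p :=
    ((hG.fderiv_right (m := 1) (by norm_num)).differentiable one_ne_zero) p
  have hg : HasFDerivAt (fun q => fderiv ℝ G q (eXi j))
      ((ContinuousLinearMap.apply ℝ ℝ (eXi j)).comp (fderiv ℝ (fderiv ℝ G) p)) p :=
    (ContinuousLinearMap.apply ℝ ℝ (eXi j)).hasFDerivAt.comp p hdf.hasFDerivAt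
  have hg2 : HasFDerivAt (fun q => ((fderiv ℝ G q (eXi j) : ℝ) : ℂ))
      (Complex.ofRealCLM.comp
        ((ContinuousLinearMap.apply ℝ ℝ (eXi j)).comp (fderiv ℝ (fderiv ℝ G) p))) p :=
    Complex.ofRealCLM.hasFDerivAt.comp p hg
  have hg3 := hg2.const_mul Complex.I
  have h1 : HasFDerivAt (fun q : (Fin n → ℝ) × (Fin n → ℝ) => ((q.1 j : ℝ) : ℂ))
      (Complex.ofRealCLM.comp ((ContinuousLinearMap.proj j).comp
        (ContinuousLinearMap.fst ℝ (Fin n → ℝ) (Fin n → ℝ)))) p :=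
    (Complex.ofRealCLM.comp ((ContinuousLinearMap.proj j).comp
        (ContinuousLinearMap.fst ℝ (Fin n → ℝ) (Fin n → ℝ)))).hasFDerivAt
  show fderiv ℝ _ p w = _
  rw [(h1.fun_add hg3).fderiv]
  try simp [smul_eq_mul]

lemma DzetaF {G : (Fin n → ℝ) × (Fin n → ℝ) → ℝ} (hG : ContDiff ℝ 2 G) (j : Fin n)
    (p w : (Fin n → ℝ) × (Fin n → ℝ)) :
    Dzeta G j p w
      = ((w.2 j : ℝ) : ℂ) - Complex.I * ((fderiv ℝ (fderiv ℝ G) p w (ex j) : ℝ) : ℂ) := by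
  have hdf : DifferentiableAt ℝ (fderiv ℝ G) p :=
    ((hG.fderiv_right (m := 1) (by norm_num)).differentiable one_ne_zero) p
  have hg : HasFDerivAt (fun q => fderiv ℝ G q (ex j))
      ((ContinuousLinearMap.apply ℝ ℝ (ex j)).comp (fderiv ℝ (fderiv ℝ G) p)) p :=
    (ContinuousLinearMap.apply ℝ ℝ (ex j)).hasFDerivAt.comp p hdf.hasFDerivAt
  have hg2 : HasFDerivAt (fun q => ((fderiv ℝ G q (ex j) : ℝ) : ℂ))
      (Complex.ofRealCLM.comp
        ((ContinuousLinearMap.apply ℝ ℝ (ex j)).comp (fderiv ℝ (fderiv ℝ G) p))) p :=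
    Complex.ofRealCLM.hasFDerivAt.comp p hg
  have hg3 := hg2.const_mul Complex.I
  have h1 : HasFDerivAt (fun q : (Fin n → ℝ) × (Fin n → ℝ) => ((q.2 j : ℝ) : ℂ))
      (Complex.ofRealCLM.comp ((ContinuousLinearMap.proj j).comp
        (ContinuousLinearMap.snd ℝ (Fin n → ℝ) (Fin n → ℝ)))) p :=
    (Complex.ofRealCLM.comp ((ContinuousLinearMap.proj j).comp
        (ContinuousLinearMap.snd ℝ (Fin n → ℝ) (Fin n → ℝ)))).hasFDerivAt
  show fderiv ℝ _ p w = _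
  rw [(h1.fun_sub hg3).fderiv]
  try simp [smul_eq_mul]

lemma hdec (w : (Fin n → ℝ) × (Fin n → ℝ)) :
    w = ∑ i, w.1 i • ex i + ∑ i, w.2 i • eXi i := by
  refine Prod.ext ?_ ?_ <;>
    simp [ex, eXi, Prod.fst_sum, Prod.snd_sum, ← Pi.single_smul, smul_eq_mul,
      Finset.univ_sum_single]

lemma Fdecomp (F : ((Fin n → ℝ) × (Fin n → ℝ)) →L[ℝ] (((Fin n → ℝ) × (Fin n → ℝ)) →L[ℝ] ℝ))
    (w v : (Fin n → ℝ) × (Fin n → ℝ)) :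
    F w v = ∑ i, w.1 i * F (ex i) v + ∑ i, w.2 i * F (eXi i) v := by
  conv_lhs => rw [hdec w]
  simp [ContinuousLinearMap.sum_apply, ContinuousLinearMap.smul_apply, smul_eq_mul]

lemma re_term (a₁ b₁ c₁ d₁ a₂ b₂ c₂ d₂ : ℝ) :
    ((((c₁ : ℝ) : ℂ) - Complex.I * ((d₁ : ℝ) : ℂ)) * (((a₂ : ℝ) : ℂ) + Complex.I * ((b₂ : ℝ) : ℂ))
      - ((((c₂ : ℝ) : ℂ)) - Complex.I * ((d₂ : ℝ) : ℂ))
        * (((a₁ : ℝ) : ℂ) + Complex.I * ((b₁ : ℝ) : ℂ))).re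
    = (c₁ * a₂ + d₁ * b₂) - (c₂ * a₁ + d₂ * b₁) := by
  simp [Complex.sub_re, Complex.add_re, Complex.mul_re, Complex.mul_im,
    Complex.I_re, Complex.I_im, Complex.ofReal_re, Complex.ofReal_im]
  try ring

end DeformAux

set_option maxHeartbeats 2000000 in
open DeformAux in
theorem deformation_R_symplectic (n : ℕ) :
    ∃ ε₁ : ℝ, 0 < ε₁ ∧ ∀ ε₀ : ℝ, 0 < ε₀ → ε₀ ≤ ε₁ →
      ∀ G : (Fin n → ℝ) × (Fin n → ℝ) → ℝ, ContDiff ℝ 2 G →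
      (∀ (x ξ : Fin n → ℝ) (m : Fin n → ℤ),
        G (x + fun i => 2 * Real.pi * (m i), ξ) = G (x, ξ)) →
      (∀ p : (Fin n → ℝ) × (Fin n → ℝ), |G p| ≤ ε₀ * Jb p.2) →
      (∀ (p : (Fin n → ℝ) × (Fin n → ℝ)) (i : Fin n),
        |fderiv ℝ G p (ex i)| ≤ ε₀ * Jb p.2) →
      (∀ (p : (Fin n → ℝ) × (Fin n → ℝ)) (i : Fin n),
        |fderiv ℝ G p (eXi i)| ≤ ε₀) →
      (∀ (p : (Fin n → ℝ) × (Fin n → ℝ)) (i j : Fin n),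
        |fderiv ℝ (fun q => fderiv ℝ G q (ex i)) p (ex j)| ≤ ε₀ * Jb p.2) →
      (∀ (p : (Fin n → ℝ) × (Fin n → ℝ)) (i j : Fin n),
        |fderiv ℝ (fun q => fderiv ℝ G q (ex i)) p (eXi j)| ≤ ε₀) →
      (∀ (p : (Fin n → ℝ) × (Fin n → ℝ)) (i j : Fin n),
        |fderiv ℝ (fun q => fderiv ℝ G q (eXi i)) p (eXi j)| ≤ ε₀ / Jb p.2) →
      ∀ (p w₁ : (Fin n → ℝ) × (Fin n → ℝ)),
        (∀ w₂ : (Fin n → ℝ) × (Fin n → ℝ),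
          (∑ j, (Dzeta G j p w₁ * Dz G j p w₂ - Dzeta G j p w₂ * Dz G j p w₁)).re = 0) →
        w₁ = 0 := by
  refine ⟨1 / (2 * n + 1), by positivity, ?_⟩
  intro ε₀ hε₀ hε₁ G hG _hper _h0 _h1x _h1ξ h4 h5 h6 p w₁ hw
  -- setup
  have hJ1 : (1 : ℝ) ≤ Jb p.2 := by
    rw [Jb]
    calc (1 : ℝ) = Real.sqrt 1 := (Real.sqrt_one).symm
      _ ≤ Real.sqrt (1 + ∑ i, p.2 i ^ 2) :=
          Real.sqrt_le_sqrt (le_add_of_nonneg_right (Finset.sum_nonneg fun i _ => sq_nonneg _))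
  set J : ℝ := Jb p.2 with hJdef
  have hJ0 : (0 : ℝ) < J := lt_of_lt_of_le one_pos hJ1
  have hkey := keyF hG p
  have hsym := symmF hG p
  have hDz : ∀ j w, Dz G j p w
      = ((w.1 j : ℝ) : ℂ) + Complex.I * ((fderiv ℝ (fderiv ℝ G) p w (eXi j) : ℝ) : ℂ) :=
    fun j w => DzF hG j p w
  have hDzeta : ∀ j w, Dzeta G j p w
      = ((w.2 j : ℝ) : ℂ) - Complex.I * ((fderiv ℝ (fderiv ℝ G) p w (ex j) : ℝ) : ℂ) :=
    fun j w => DzetaF hG j p w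
  set F := fderiv ℝ (fderiv ℝ G) p with hF
  -- coordinate bounds on F
  have hAA : ∀ i j, |F (ex i) (ex j)| ≤ ε₀ * J := fun i j =>
    (hkey (ex j) (ex i)) ▸ h4 p j i
  have hBA : ∀ i j, |F (eXi i) (ex j)| ≤ ε₀ := fun i j =>
    (hkey (ex j) (eXi i)) ▸ h5 p j i
  have hAB : ∀ i j, |F (ex i) (eXi j)| ≤ ε₀ := fun i j => by
    rw [hsym (ex i) (eXi j)]
    exact (hkey (ex i) (eXi j)) ▸ h5 p i j
  have hBB : ∀ i j, |F (eXi i) (eXi j)| ≤ ε₀ / J := fun i j =>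
    (hkey (eXi j) (eXi i)) ▸ h6 p j i
  -- general direction bounds
  have hboundx : ∀ (w : (Fin n → ℝ) × (Fin n → ℝ)) (j : Fin n),
      |F w (ex j)| ≤ ε₀ * (J * (∑ i, |w.1 i|) + ∑ i, |w.2 i|) := by
    intro w j
    calc |F w (ex j)| ≤ ∑ i, |w.1 i * F (ex i) (ex j)| + ∑ i, |w.2 i * F (eXi i) (ex j)| := by
          rw [Fdecomp]
          exact (abs_add_le _ _).trans
            (add_le_add (Finset.abs_sum_le_sum_abs _ _) (Finset.abs_sum_le_sum_abs _ _))
      _ ≤ ∑ i, |w.1 i| * (ε₀ * J) + ∑ i, |w.2 i| * ε₀ :=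
          add_le_add
            (Finset.sum_le_sum fun i _ => by
              rw [abs_mul]; exact mul_le_mul_of_nonneg_left (hAA i j) (abs_nonneg _))
            (Finset.sum_le_sum fun i _ => by
              rw [abs_mul]; exact mul_le_mul_of_nonneg_left (hBA i j) (abs_nonneg _))
      _ = ε₀ * (J * (∑ i, |w.1 i|) + ∑ i, |w.2 i|) := by
          rw [← Finset.sum_mul, ← Finset.sum_mul]; ring
  have hboundξ : ∀ (w : (Fin n → ℝ) × (Fin n → ℝ)) (j : Fin n),
      |F w (eXi j)| ≤ ε₀ / J * (J * (∑ i, |w.1 i|) + ∑ i, |w.2 i|) := by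
    intro w j
    calc |F w (eXi j)| ≤ ∑ i, |w.1 i * F (ex i) (eXi j)| + ∑ i, |w.2 i * F (eXi i) (eXi j)| := by
          rw [Fdecomp]
          exact (abs_add_le _ _).trans
            (add_le_add (Finset.abs_sum_le_sum_abs _ _) (Finset.abs_sum_le_sum_abs _ _))
      _ ≤ ∑ i, |w.1 i| * ε₀ + ∑ i, |w.2 i| * (ε₀ / J) :=
          add_le_add
            (Finset.sum_le_sum fun i _ => by
              rw [abs_mul]; exact mul_le_mul_of_nonneg_left (hAB i j) (abs_nonneg _))
            (Finset.sum_le_sum fun i _ => by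
              rw [abs_mul]; exact mul_le_mul_of_nonneg_left (hBB i j) (abs_nonneg _))
      _ = ε₀ / J * (J * (∑ i, |w.1 i|) + ∑ i, |w.2 i|) := by
          rw [← Finset.sum_mul, ← Finset.sum_mul]; field_simp
  -- the test vector
  set s1 : ℝ := ∑ i, |w₁.1 i| with hs1def
  set s2 : ℝ := ∑ i, |w₁.2 i| with hs2def
  set K : ℝ := J * s1 + s2 with hKdef
  set w₂ : (Fin n → ℝ) × (Fin n → ℝ) := (fun j => w₁.2 j / J, fun j => -(J * w₁.1 j)) with hw₂
  have hw₂1 : ∑ i, |w₂.1 i| = s2 / J := by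
    rw [hs2def, Finset.sum_div]
    exact Finset.sum_congr rfl fun i _ => by
      rw [show w₂.1 i = w₁.2 i / J from rfl, abs_div, abs_of_pos hJ0]
  have hw₂2 : ∑ i, |w₂.2 i| = J * s1 := by
    rw [hs1def, Finset.mul_sum]
    exact Finset.sum_congr rfl fun i _ => by
      rw [show w₂.2 i = -(J * w₁.1 i) from rfl, abs_neg, abs_mul, abs_of_pos hJ0]
  have hKw₂ : J * (∑ i, |w₂.1 i|) + ∑ i, |w₂.2 i| = K := by
    rw [hw₂1, hw₂2, hKdef]; field_simp; ring
  have hx1 : ∀ j, |F w₁ (ex j)| ≤ ε₀ * K := fun j => hboundx w₁ j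
  have hξ1 : ∀ j, |F w₁ (eXi j)| ≤ ε₀ / J * K := fun j => hboundξ w₁ j
  have hx2 : ∀ j, |F w₂ (ex j)| ≤ ε₀ * K := fun j => by
    have := hboundx w₂ j; rwa [hKw₂] at this
  have hξ2 : ∀ j, |F w₂ (eXi j)| ≤ ε₀ / J * K := fun j => by
    have := hboundξ w₂ j; rwa [hKw₂] at this
  -- rewrite the symplectic pairing
  have hterm : ∀ j, (Dzeta G j p w₁ * Dz G j p w₂ - Dzeta G j p w₂ * Dz G j p w₁).re
      = (w₁.2 j * w₂.1 j + F w₁ (ex j) * F w₂ (eXi j))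
        - (w₂.2 j * w₁.1 j + F w₂ (ex j) * F w₁ (eXi j)) := by
    intro j
    rw [hDzeta j w₁, hDz j w₂, hDzeta j w₂, hDz j w₁]
    exact re_term _ _ _ _ _ _ _ _
  have h0 := hw w₂
  rw [Complex.re_sum] at h0
  have h0' : ∑ j, ((w₁.2 j * w₂.1 j + F w₁ (ex j) * F w₂ (eXi j))
      - (w₂.2 j * w₁.1 j + F w₂ (ex j) * F w₁ (eXi j))) = 0 := by
    rw [← h0]; exact Finset.sum_congr rfl fun j _ => (hterm j).symm
  set P : ℝ := ∑ j, (w₁.1 j) ^ 2 with hPdef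
  set Q : ℝ := ∑ j, (w₁.2 j) ^ 2 with hQdef
  have hP0 : 0 ≤ P := Finset.sum_nonneg fun j _ => sq_nonneg _
  have hQ0 : 0 ≤ Q := Finset.sum_nonneg fun j _ => sq_nonneg _
  have hid : Q / J + J * P
      = ∑ j, (F w₂ (ex j) * F w₁ (eXi j) - F w₁ (ex j) * F w₂ (eXi j)) := by
    have h2 : (Q / J + J * P)
        - ∑ j, (F w₂ (ex j) * F w₁ (eXi j) - F w₁ (ex j) * F w₂ (eXi j))
        = ∑ j, ((w₁.2 j * w₂.1 j + F w₁ (ex j) * F w₂ (eXi j))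
            - (w₂.2 j * w₁.1 j + F w₂ (ex j) * F w₁ (eXi j))) := by
      rw [hPdef, hQdef, Finset.sum_div, Finset.mul_sum, ← Finset.sum_add_distrib,
        ← Finset.sum_sub_distrib]
      refine Finset.sum_congr rfl fun j _ => ?_
      have e1 : w₂.1 j = w₁.2 j / J := rfl
      have e2 : w₂.2 j = -(J * w₁.1 j) := rfl
      rw [e1, e2]
      ring
    linarith [h2, h0']
  have e₂1 : ∀ j, w₂.1 j = w₁.2 j / J := fun _ => rfl
  have e₂2 : ∀ j, w₂.2 j = -(J * w₁.1 j) := fun _ => rfl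
  have hs1nn : 0 ≤ s1 := Finset.sum_nonneg fun i _ => abs_nonneg _
  have hs2nn : 0 ≤ s2 := Finset.sum_nonneg fun i _ => abs_nonneg _
  have hK0 : 0 ≤ K := add_nonneg (mul_nonneg hJ0.le hs1nn) hs2nn
  clear_value J s1 s2 K P Q F w₂
  have habs : Q / J + J * P ≤ (n : ℝ) * (2 * (ε₀ * K) * (ε₀ / J * K)) := by
    rw [hid]
    calc ∑ j, (F w₂ (ex j) * F w₁ (eXi j) - F w₁ (ex j) * F w₂ (eXi j))
        ≤ ∑ j, (|F w₂ (ex j)| * |F w₁ (eXi j)| + |F w₁ (ex j)| * |F w₂ (eXi j)|) :=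
          Finset.sum_le_sum fun j _ => by
            calc F w₂ (ex j) * F w₁ (eXi j) - F w₁ (ex j) * F w₂ (eXi j)
                ≤ |F w₂ (ex j) * F w₁ (eXi j) - F w₁ (ex j) * F w₂ (eXi j)| := le_abs_self _
              _ ≤ |F w₂ (ex j) * F w₁ (eXi j)| + |F w₁ (ex j) * F w₂ (eXi j)| := abs_sub _ _
              _ = |F w₂ (ex j)| * |F w₁ (eXi j)| + |F w₁ (ex j)| * |F w₂ (eXi j)| := by
                  rw [abs_mul, abs_mul]
      _ ≤ ∑ _j : Fin n, ((ε₀ * K) * (ε₀ / J * K) + (ε₀ * K) * (ε₀ / J * K)) :=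
          Finset.sum_le_sum fun j _ => add_le_add
            (mul_le_mul (hx2 j) (hξ1 j) (abs_nonneg _) (mul_nonneg hε₀.le hK0))
            (mul_le_mul (hx1 j) (hξ2 j) (abs_nonneg _) (mul_nonneg hε₀.le hK0))
      _ = (n : ℝ) * (2 * (ε₀ * K) * (ε₀ / J * K)) := by
          rw [Finset.sum_const, Finset.card_univ, Fintype.card_fin]
          push_cast
          ring
  have hs1sq : s1 ^ 2 ≤ (n : ℝ) * P := by
    have h := sq_sum_le_card_mul_sum_sq (s := (Finset.univ : Finset (Fin n)))
      (f := fun i => |w₁.1 i|)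
    simp only [_root_.sq_abs, Finset.card_univ, Fintype.card_fin] at h
    rw [hs1def, hPdef]
    exact_mod_cast h
  have hs2sq : s2 ^ 2 ≤ (n : ℝ) * Q := by
    have h := sq_sum_le_card_mul_sum_sq (s := (Finset.univ : Finset (Fin n)))
      (f := fun i => |w₁.2 i|)
    simp only [_root_.sq_abs, Finset.card_univ, Fintype.card_fin] at h
    rw [hs2def, hQdef]
    exact_mod_cast h
  have hKsq : K ^ 2 ≤ 2 * ((n : ℝ) * (J ^ 2 * P) + (n : ℝ) * Q) := by
    have h1 : J ^ 2 * s1 ^ 2 ≤ J ^ 2 * ((n : ℝ) * P) :=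
      mul_le_mul_of_nonneg_left hs1sq (sq_nonneg J)
    nlinarith [sq_nonneg (J * s1 - s2), h1, hs2sq]
  have h3 : J ^ 2 * P + Q ≤ 2 * (n : ℝ) * ε₀ ^ 2 * K ^ 2 := by
    have h1 : J * (Q / J + J * P) = J ^ 2 * P + Q := by field_simp; ring
    have h2 : J * ((n : ℝ) * (2 * (ε₀ * K) * (ε₀ / J * K))) = 2 * (n : ℝ) * ε₀ ^ 2 * K ^ 2 := by
      field_simp
    calc J ^ 2 * P + Q = J * (Q / J + J * P) := h1.symm
      _ ≤ J * ((n : ℝ) * (2 * (ε₀ * K) * (ε₀ / J * K))) :=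
          mul_le_mul_of_nonneg_left habs hJ0.le
      _ = 2 * (n : ℝ) * ε₀ ^ 2 * K ^ 2 := h2
  have hchain : J ^ 2 * P + Q ≤ 4 * (n : ℝ) ^ 2 * ε₀ ^ 2 * (J ^ 2 * P + Q) := by
    have h4 : 2 * (n : ℝ) * ε₀ ^ 2 * K ^ 2
        ≤ 2 * (n : ℝ) * ε₀ ^ 2 * (2 * ((n : ℝ) * (J ^ 2 * P) + (n : ℝ) * Q)) :=
      mul_le_mul_of_nonneg_left hKsq (by positivity)
    nlinarith [h3, h4]
  have hc : 4 * (n : ℝ) ^ 2 * ε₀ ^ 2 < 1 := by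
    have hpos : (0 : ℝ) < 2 * (n : ℝ) + 1 := by positivity
    have h2n : ε₀ * (2 * (n : ℝ) + 1) ≤ 1 := (le_div_iff₀ hpos).mp hε₁
    have hxx : 0 < ε₀ * ε₀ := mul_pos hε₀ hε₀
    have hA : (ε₀ * (2 * (n : ℝ) + 1)) ^ 2 ≤ 1 := by
      nlinarith [h2n, mul_pos hε₀ hpos]
    have hn : (0 : ℝ) ≤ (n : ℝ) := Nat.cast_nonneg n
    nlinarith [hA, hxx, hn, mul_nonneg hn hxx.le]
  clear hw hterm h0 h0' hDz hDzeta hkey hsym hboundx hboundξ _hper _h0 _h1x _h1ξ h4 h5 h6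
    hAA hBA hAB hBB hx1 hx2 hξ1 hξ2 hw₂1 hw₂2 hKw₂ e₂1 e₂2 hid habs hw₂ hF
  have hYnn : 0 ≤ J ^ 2 * P + Q := add_nonneg (mul_nonneg (sq_nonneg J) hP0) hQ0
  have hYle : J ^ 2 * P + Q ≤ 0 := by
    by_contra hpos
    push_neg at hpos
    have h5 : 4 * (n : ℝ) ^ 2 * ε₀ ^ 2 * (J ^ 2 * P + Q) < 1 * (J ^ 2 * P + Q) :=
      mul_lt_mul_of_pos_right hc hpos
    linarith [hchain, h5]
  have hY0 : J ^ 2 * P + Q = 0 := le_antisymm hYle hYnn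
  have hJsq : (1 : ℝ) ≤ J ^ 2 := by nlinarith [hJ1]
  have hPzero : P = 0 := by
    have hm : 0 ≤ (J ^ 2 - 1) * P := mul_nonneg (by linarith) hP0
    nlinarith [hm, hY0, hQ0, hP0]
  have hQzero : Q = 0 := by
    have hm : 0 ≤ J ^ 2 * P := mul_nonneg (sq_nonneg J) hP0
    linarith [hm, hY0, hQ0]
  have hPs : ∑ j, (w₁.1 j) ^ 2 = 0 := by rw [← hPdef]; exact hPzero
  have hQs : ∑ j, (w₁.2 j) ^ 2 = 0 := by rw [← hQdef]; exact hQzero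
  have h1z : ∀ j, w₁.1 j = 0 := fun j =>
    pow_eq_zero_iff two_ne_zero |>.mp
      ((Finset.sum_eq_zero_iff_of_nonneg fun i _ => sq_nonneg (w₁.1 i)).mp hPs j
        (Finset.mem_univ j))
  have h2z : ∀ j, w₁.2 j = 0 := fun j =>
    pow_eq_zero_iff two_ne_zero |>.mp
      ((Finset.sum_eq_zero_iff_of_nonneg fun i _ => sq_nonneg (w₁.2 i)).mp hQs j
        (Finset.mem_univ j))
  exact Prod.ext (funext fun j => h1z j) (funext fun j => h2z j)

end
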